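/- Let C be a category of fibrant objects with class of weak equivalences W and class of trivial fibrations T (fibrations that are weak equivalences). Then W equals the closure of T under the 2-out-of-3 property; consequently, the localization of C at W coincides with the localization of C at T (a functor F : C → D inverts all weak equivalences if and only if it inverts all trivial fibrations). -/

import Mathlib

open CategoryTheory CategoryTheory.Limits

/-- The closure of a class of morphisms under the 2-out-of-3 property. -/
inductive Closure23 {C : Type*} [Category C] (W : MorphismProperty C) :
    ∀ ⦃X Y : C⦄, (X ⟶ Y) → Prop
  | of {X Y : C} (f : X ⟶ Y) : W f → Closure23 W f
  | comp {X Y Z : C} (f : X ⟶ Y) (g : Y ⟶ Z) :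
      Closure23 W f → Closure23 W g → Closure23 W (f ≫ g)
  | cancelLeft {X Y Z : C} (f : X ⟶ Y) (g : Y ⟶ Z) :
      Closure23 W f → Closure23 W (f ≫ g) → Closure23 W g
  | cancelRight {X Y Z : C} (f : X ⟶ Y) (g : Y ⟶ Z) :
      Closure23 W g → Closure23 W (f ≫ g) → Closure23 W f

private lemma prodFstPb {C : Type*} [Category C] [HasBinaryProducts C] {A B B' : C} (f : A ⟶ B) :
    IsPullback (prod.fst : A ⨯ B' ⟶ A) (prod.map f (𝟙 B')) f (prod.fst : B ⨯ B' ⟶ B) := by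
  refine IsPullback.of_isLimit (PullbackCone.IsLimit.mk (prod.map_fst f (𝟙 B')).symm
    (fun s => prod.lift s.fst (s.snd ≫ prod.snd)) (fun s => prod.lift_fst _ _)
    (fun s => ?_) (fun s m h1 h2 => ?_))
  · apply Limits.prod.hom_ext
    · simp only [Category.assoc, prod.map_fst, prod.lift_fst_assoc, s.condition]
    · simp only [Category.assoc, prod.map_snd, prod.lift_snd_assoc, Category.comp_id,
        prod.lift_snd]
  · apply Limits.prod.hom_ext
    · simpa [prod.lift_fst] using h1
    · have := h2 =≫ (prod.snd : B ⨯ B' ⟶ B')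
      simp only [Category.assoc, prod.map_snd, Category.comp_id] at this
      simpa [prod.lift_snd] using this

/-- In a category of fibrant objects, the weak equivalences are the 2-out-of-3
closure of the trivial fibrations; consequently a functor inverts all weak
equivalences iff it inverts all trivial fibrations. -/
theorem stmt16 {C : Type*} [Category C] [HasTerminal C] [HasBinaryProducts C]
    (Weq Fib : MorphismProperty C)
    (Weq_iso : ∀ {X Y : C} (f : X ⟶ Y), IsIso f → Weq f)
    (Weq_comp : ∀ {X Y Z : C} (f : X ⟶ Y) (g : Y ⟶ Z), Weq f → Weq g → Weq (f ≫ g))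
    (Weq_cancelLeft : ∀ {X Y Z : C} (f : X ⟶ Y) (g : Y ⟶ Z), Weq f → Weq (f ≫ g) → Weq g)
    (Weq_cancelRight : ∀ {X Y Z : C} (f : X ⟶ Y) (g : Y ⟶ Z), Weq g → Weq (f ≫ g) → Weq f)
    (Fib_iso : ∀ {X Y : C} (f : X ⟶ Y), IsIso f → Fib f)
    (Fib_comp : ∀ {X Y Z : C} (f : X ⟶ Y) (g : Y ⟶ Z), Fib f → Fib g → Fib (f ≫ g))
    (pb_exists : ∀ {a b x : C} (m : a ⟶ b) (h : x ⟶ b), Fib m →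
      ∃ (P : C) (p₁ : P ⟶ x) (p₂ : P ⟶ a), IsPullback p₁ p₂ h m)
    (Fib_stab : ∀ {a b x P : C} (m : a ⟶ b) (h : x ⟶ b) (p₁ : P ⟶ x) (p₂ : P ⟶ a),
      IsPullback p₁ p₂ h m → Fib m → Fib p₁)
    (Triv_stab : ∀ {a b x P : C} (m : a ⟶ b) (h : x ⟶ b) (p₁ : P ⟶ x) (p₂ : P ⟶ a),
      IsPullback p₁ p₂ h m → Fib m → Weq m → Fib p₁ ∧ Weq p₁)
    (fibrant : ∀ X : C, Fib (terminal.from X))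
    (path : ∀ X : C, ∃ (PX : C) (ip : X ⟶ PX) (q : PX ⟶ X ⨯ X),
      Weq ip ∧ Fib q ∧ ip ≫ q = diag X) :
    -- W is the 2-out-of-3 closure of the trivial fibrations T
    (∀ {X Y : C} (f : X ⟶ Y),
      Weq f ↔ Closure23 (fun _ _ g => Fib g ∧ Weq g : MorphismProperty C) f) ∧
    -- a functor inverts all of W iff it inverts all of T
    (∀ {D : Type*} [Category D] (F : C ⥤ D),
      (∀ {X Y : C} (f : X ⟶ Y), Weq f → IsIso (F.map f)) ↔
      (∀ {X Y : C} (f : X ⟶ Y), Fib f → Weq f → IsIso (F.map f))) := by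
  have key : ∀ {X Y : C} (f : X ⟶ Y), Weq f →
      Closure23 (fun _ _ g => Fib g ∧ Weq g : MorphismProperty C) f := by
    intro A B f hf
    obtain ⟨PB, ip, q, hip, hq, hdiag⟩ := path B
    -- the two projections are fibrations
    have hfstBB : Fib (prod.fst : B ⨯ B ⟶ B) :=
      Fib_stab (terminal.from B) (terminal.from B) _ _
        (IsPullback.of_hasBinaryProduct' B B) (fibrant B)
    have hsndAB : Fib (prod.snd : A ⨯ B ⟶ B) :=
      Fib_stab (terminal.from A) (terminal.from B) _ _
        (IsPullback.of_hasBinaryProduct' A B).flip (fibrant A)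
    -- d₀ = q ≫ fst is a trivial fibration
    have hd0fib : Fib (q ≫ prod.fst) := Fib_comp _ _ hq hfstBB
    have hretr : ip ≫ q ≫ prod.fst = 𝟙 B := by
      rw [← Category.assoc, hdiag]; simp [diag, prod.lift_fst]
    have hd0weq : Weq (q ≫ prod.fst) := by
      refine Weq_cancelLeft ip _ hip ?_
      rw [hretr]; exact Weq_iso _ inferInstance
    -- mapping path space: pullback of q along f ⨯ 𝟙
    obtain ⟨P, pr1, pr2, hPB⟩ := pb_exists q (prod.map f (𝟙 B)) hq
    -- pasted square: P is the pullback of d₀ along f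
    have hpaste : IsPullback (pr1 ≫ prod.fst) pr2 f (q ≫ prod.fst) :=
      hPB.paste_horiz (prodFstPb f)
    obtain ⟨hFibπ, hWeqπ⟩ := Triv_stab (q ≫ prod.fst) f _ _ hpaste hd0fib hd0weq
    -- section i : A ⟶ P
    have w : prod.lift (𝟙 A) f ≫ prod.map f (𝟙 B) = (f ≫ ip) ≫ q := by
      rw [Category.assoc, hdiag]
      apply Limits.prod.hom_ext <;> simp [diag]
    set i : A ⟶ P := hPB.lift (prod.lift (𝟙 A) f) (f ≫ ip) w with hi
    have hsec : i ≫ pr1 ≫ prod.fst = 𝟙 A := by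
      rw [← Category.assoc, hi, hPB.lift_fst]; simp [prod.lift_fst]
    have hfeq : i ≫ pr1 ≫ prod.snd = f := by
      rw [← Category.assoc, hi, hPB.lift_fst]; simp [prod.lift_snd]
    -- p : P ⟶ B is a trivial fibration
    have hfibpr1 : Fib pr1 := Fib_stab q (prod.map f (𝟙 B)) pr1 pr2 hPB hq
    have hfibp : Fib (pr1 ≫ prod.snd) := Fib_comp _ _ hfibpr1 hsndAB
    have hweqi : Weq i := by
      refine Weq_cancelRight i (pr1 ≫ prod.fst) hWeqπ ?_
      rw [hsec]; exact Weq_iso _ inferInstance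
    have hweqp : Weq (pr1 ≫ prod.snd) := by
      refine Weq_cancelLeft i _ hweqi ?_
      rw [hfeq]; exact hf
    -- assemble the closure membership
    have cπ : Closure23 (fun _ _ g => Fib g ∧ Weq g : MorphismProperty C) (pr1 ≫ prod.fst) :=
      .of _ ⟨hFibπ, hWeqπ⟩
    have cid : Closure23 (fun _ _ g => Fib g ∧ Weq g : MorphismProperty C)
        (i ≫ pr1 ≫ prod.fst) := by
      rw [hsec]; exact .of _ ⟨Fib_iso _ inferInstance, Weq_iso _ inferInstance⟩
    have ci : Closure23 (fun _ _ g => Fib g ∧ Weq g : MorphismProperty C) i :=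
      .cancelRight i _ cπ cid
    have cp : Closure23 (fun _ _ g => Fib g ∧ Weq g : MorphismProperty C) (pr1 ≫ prod.snd) :=
      .of _ ⟨hfibp, hweqp⟩
    have : Closure23 (fun _ _ g => Fib g ∧ Weq g : MorphismProperty C)
        (i ≫ pr1 ≫ prod.snd) := .comp _ _ ci cp
    rwa [hfeq] at this
  have rev : ∀ {X Y : C} (f : X ⟶ Y),
      Closure23 (fun _ _ g => Fib g ∧ Weq g : MorphismProperty C) f → Weq f := by
    intro X Y f h
    induction h with
    | of f hf => exact hf.2
    | comp f g _ _ hf hg => exact Weq_comp _ _ hf hg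
    | cancelLeft f g _ _ hf hfg => exact Weq_cancelLeft _ _ hf hfg
    | cancelRight f g _ _ hg hfg => exact Weq_cancelRight _ _ hg hfg
  refine ⟨fun f => ⟨key f, rev f⟩, fun F => ⟨fun h X Y f hFib hWeq => h f hWeq,
    fun h X Y f hf => ?_⟩⟩
  have hc := key f hf
  clear hf
  induction hc with
  | of g hg => exact h g hg.1 hg.2
  | comp f g _ _ hf hg =>
      rw [F.map_comp]
      exact @IsIso.comp_isIso _ _ _ _ _ _ _ hf hg
  | cancelLeft f g _ _ hf hfg =>
      rw [F.map_comp] at hfg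
      exact @IsIso.of_isIso_comp_left _ _ _ _ _ (F.map f) (F.map g) hf hfg
  | cancelRight f g _ _ hg hfg =>
      rw [F.map_comp] at hfg
      exact @IsIso.of_isIso_comp_right _ _ _ _ _ (F.map f) (F.map g) hg hfg
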